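/- Let Q_n → Q∞ weakly in P(X), and let (u_n, v_n) be the unique saddle point of the strictly convex–concave regularized functional L_n(y, λ, Q_n) = E_{Q_n}[l(y, λ, x)] + (‖y‖² − λ²)/n. Then L_n(u_n, v_n, Q_n) → L(u∞, v∞, Q∞) as n → ∞, where (u∞, v∞) is any saddle point of L(·, ·, Q∞). -/

import Mathlib

open MeasureTheory Filter Topology BoundedContinuousFunction

section Aux

variable {X : Type*} [MetricSpace X] [CompactSpace X] [MeasurableSpace X] [BorelSpace X]

private lemma aux_integral_bcf
    {μk : ℕ → ProbabilityMeasure X} {μ : ProbabilityMeasure X}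
    (hμ : Tendsto μk atTop (𝓝 μ))
    {fk : ℕ → X →ᵇ ℝ} {f : X →ᵇ ℝ} (hf : Tendsto fk atTop (𝓝 f)) :
    Tendsto (fun k => ∫ x, fk k x ∂(μk k : Measure X)) atTop
      (𝓝 (∫ x, f x ∂(μ : Measure X))) := by
  have h1 := ProbabilityMeasure.tendsto_iff_forall_integral_tendsto.mp hμ f
  have h2 : Tendsto
      (fun k => (∫ x, fk k x ∂(μk k : Measure X)) - ∫ x, f x ∂(μk k : Measure X))
      atTop (𝓝 0) := by
    refine squeeze_zero_norm (a := fun k => ‖fk k - f‖) (fun k => ?_) ?_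
    ·
      have hint1 : Integrable (fun x => fk k x) (μk k : Measure X) := (fk k).integrable _
      have hint2 : Integrable (fun x => f x) (μk k : Measure X) := f.integrable _
      rw [← integral_sub hint1 hint2]
      calc ‖∫ x, (fk k x - f x) ∂(μk k : Measure X)‖
          ≤ ‖fk k - f‖ * ((μk k : Measure X) Set.univ).toReal := by
            apply norm_integral_le_of_norm_le_const
            refine Filter.Eventually.of_forall fun x => ?_
            calc ‖fk k x - f x‖ = ‖(fk k - f) x‖ := by simp
              _ ≤ ‖fk k - f‖ := (fk k - f).norm_coe_le_norm x
        _ = ‖fk k - f‖ := by simp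
    · simpa using tendsto_iff_norm_sub_tendsto_zero.mp hf
  have h3 := h2.add h1
  simpa using h3

private lemma aux_integral_param {m : ℕ}
    (l : EuclideanSpace ℝ (Fin m) → ℝ → X → ℝ)
    (hl : Continuous fun p : EuclideanSpace ℝ (Fin m) × ℝ × X => l p.1 p.2.1 p.2.2)
    {μk : ℕ → ProbabilityMeasure X} {μ : ProbabilityMeasure X}
    (hμ : Tendsto μk atTop (𝓝 μ))
    {yk : ℕ → EuclideanSpace ℝ (Fin m)} {y : EuclideanSpace ℝ (Fin m)}
    (hy : Tendsto yk atTop (𝓝 y))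
    {lk : ℕ → ℝ} {lam : ℝ} (hlam : Tendsto lk atTop (𝓝 lam)) :
    Tendsto (fun k => ∫ x, l (yk k) (lk k) x ∂(μk k : Measure X)) atTop
      (𝓝 (∫ x, l y lam x ∂(μ : Measure X))) := by
  let G : C((EuclideanSpace ℝ (Fin m) × ℝ) × X, ℝ) :=
    ⟨fun q => l q.1.1 q.1.2 q.2,
      hl.comp (continuous_fst.fst.prodMk (continuous_fst.snd.prodMk continuous_snd))⟩
  let F : EuclideanSpace ℝ (Fin m) × ℝ → (X →ᵇ ℝ) :=
    fun p => (ContinuousMap.isometryEquivBoundedOfCompact X ℝ) (G.curry p)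
  have hF : Continuous F :=
    (ContinuousMap.isometryEquivBoundedOfCompact X ℝ).continuous.comp G.curry.continuous
  have hf : Tendsto (fun k => F (yk k, lk k)) atTop (𝓝 (F (y, lam))) :=
    (hF.tendsto _).comp (hy.prodMk_nhds hlam)
  have := aux_integral_bcf hμ hf
  simpa [F, G, ContinuousMap.isometryEquivBoundedOfCompact_apply] using this

private lemma aux_div_zero {σ : ℕ → ℕ} (hσ : Tendsto σ atTop atTop)
    {c : ℕ → ℝ} {a : ℝ} (hc : Tendsto c atTop (𝓝 a)) :
    Tendsto (fun k => c k / (σ k : ℝ)) atTop (𝓝 0) := by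
  have hinv : Tendsto (fun k => ((σ k : ℝ))⁻¹) atTop (𝓝 0) :=
    tendsto_inv_atTop_zero.comp (tendsto_natCast_atTop_atTop.comp hσ)
  have := hc.mul hinv
  simpa [div_eq_mul_inv] using this

end Aux

/-- If `Q_n → Q∞` weakly and `(u_n, v_n)` is a saddle point of the regularized functional
`L_n(y,λ,Q_n) = E_{Q_n}[l] + (‖y‖² − λ²)/n`, then `L_n(u_n,v_n,Q_n) → L(u∞,v∞,Q∞)`
for any saddle point `(u∞, v∞)` of `L(·,·,Q∞)`. -/
theorem stmt5 {m : ℕ} {X : Type*}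
    [MetricSpace X] [CompactSpace X] [MeasurableSpace X] [BorelSpace X]
    (Y : Set (EuclideanSpace ℝ (Fin m))) (hYc : IsCompact Y) (hYconv : Convex ℝ Y)
    (hYne : Y.Nonempty)
    (Λ : Set ℝ) (hΛc : IsCompact Λ) (hΛconv : Convex ℝ Λ) (hΛne : Λ.Nonempty)
    (l : EuclideanSpace ℝ (Fin m) → ℝ → X → ℝ)
    (hl : Continuous fun p : EuclideanSpace ℝ (Fin m) × ℝ × X => l p.1 p.2.1 p.2.2)
    (hconv : ∀ lam ∈ Λ, ∀ x : X, ConvexOn ℝ Y fun y => l y lam x)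
    (hconc : ∀ y ∈ Y, ∀ x : X, ConcaveOn ℝ Λ fun lam => l y lam x)
    (Q : ℕ → ProbabilityMeasure X) (Qinf : ProbabilityMeasure X)
    (hQ : Tendsto Q atTop (𝓝 Qinf))
    (u : ℕ → EuclideanSpace ℝ (Fin m)) (v : ℕ → ℝ)
    (hu : ∀ n, u n ∈ Y) (hv : ∀ n, v n ∈ Λ)
    (hsaddle : ∀ n : ℕ, 1 ≤ n → ∀ y ∈ Y, ∀ lam ∈ Λ,
      ((∫ x, l (u n) lam x ∂(Q n : Measure X)) + (‖u n‖ ^ 2 - lam ^ 2) / n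
          ≤ (∫ x, l (u n) (v n) x ∂(Q n : Measure X)) + (‖u n‖ ^ 2 - v n ^ 2) / n) ∧
        ((∫ x, l (u n) (v n) x ∂(Q n : Measure X)) + (‖u n‖ ^ 2 - v n ^ 2) / n
          ≤ (∫ x, l y (v n) x ∂(Q n : Measure X)) + (‖y‖ ^ 2 - v n ^ 2) / n))
    (uinf : EuclideanSpace ℝ (Fin m)) (vinf : ℝ) (huinf : uinf ∈ Y) (hvinf : vinf ∈ Λ)
    (hsaddleinf : ∀ y ∈ Y, ∀ lam ∈ Λ,
      (∫ x, l uinf lam x ∂(Qinf : Measure X)) ≤ (∫ x, l uinf vinf x ∂(Qinf : Measure X)) ∧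
        (∫ x, l uinf vinf x ∂(Qinf : Measure X)) ≤ ∫ x, l y vinf x ∂(Qinf : Measure X)) :
    Tendsto (fun n : ℕ =>
        (∫ x, l (u n) (v n) x ∂(Q n : Measure X)) + (‖u n‖ ^ 2 - v n ^ 2) / n)
      atTop (𝓝 (∫ x, l uinf vinf x ∂(Qinf : Measure X))) := by
  apply tendsto_of_subseq_tendsto
  intro ns hns
  obtain ⟨us, husY, φ1, hφ1, hu1⟩ := hYc.tendsto_subseq (x := fun k => u (ns k))
    (fun k => hu (ns k))
  obtain ⟨vs, hvsΛ, φ2, hφ2, hv2⟩ := hΛc.tendsto_subseq (x := fun k => v (ns (φ1 k)))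
    (fun k => hv (ns (φ1 k)))
  set σ : ℕ → ℕ := fun k => ns (φ1 (φ2 k)) with hσdef
  have hσtop : Tendsto σ atTop atTop := hns.comp ((hφ1.comp hφ2).tendsto_atTop)
  have hQσ : Tendsto (fun k => Q (σ k)) atTop (𝓝 Qinf) := hQ.comp hσtop
  have huσ : Tendsto (fun k => u (σ k)) atTop (𝓝 us) := hu1.comp hφ2.tendsto_atTop
  have hvσ : Tendsto (fun k => v (σ k)) atTop (𝓝 vs) := hv2
  -- convergence of the value along σ
  have hIσ : Tendsto (fun k => ∫ x, l (u (σ k)) (v (σ k)) x ∂(Q (σ k) : Measure X))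
      atTop (𝓝 (∫ x, l us vs x ∂(Qinf : Measure X))) :=
    aux_integral_param l hl hQσ huσ hvσ
  have hnorm : Tendsto (fun k => ‖u (σ k)‖ ^ 2) atTop (𝓝 (‖us‖ ^ 2)) := (huσ.norm).pow 2
  have hregσ : Tendsto (fun k => (‖u (σ k)‖ ^ 2 - v (σ k) ^ 2) / (σ k : ℝ)) atTop (𝓝 0) :=
    aux_div_zero hσtop (hnorm.sub (hvσ.pow 2))
  have hS : Tendsto (fun k =>
      (∫ x, l (u (σ k)) (v (σ k)) x ∂(Q (σ k) : Measure X))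
        + (‖u (σ k)‖ ^ 2 - v (σ k) ^ 2) / (σ k : ℝ))
      atTop (𝓝 (∫ x, l us vs x ∂(Qinf : Measure X))) := by
    simpa using hIσ.add hregσ
  have hev : ∀ᶠ k in atTop, 1 ≤ σ k := hσtop.eventually_ge_atTop 1
  -- (us, vs) is a saddle point of L(·,·,Qinf)
  have hA : ∀ lam ∈ Λ, (∫ x, l us lam x ∂(Qinf : Measure X))
      ≤ ∫ x, l us vs x ∂(Qinf : Measure X) := by
    intro lam hlam
    have hL : Tendsto (fun k =>
        (∫ x, l (u (σ k)) lam x ∂(Q (σ k) : Measure X))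
          + (‖u (σ k)‖ ^ 2 - lam ^ 2) / (σ k : ℝ))
        atTop (𝓝 (∫ x, l us lam x ∂(Qinf : Measure X))) := by
      have h1 := aux_integral_param l hl hQσ huσ (tendsto_const_nhds (x := lam))
      have h2 := aux_div_zero hσtop (hnorm.sub (tendsto_const_nhds (x := lam ^ 2)))
      simpa using h1.add h2
    refine le_of_tendsto_of_tendsto hL hS ?_
    filter_upwards [hev] with k hk
    exact (hsaddle (σ k) hk us husY lam hlam).1
  have hB : ∀ y ∈ Y, (∫ x, l us vs x ∂(Qinf : Measure X))
      ≤ ∫ x, l y vs x ∂(Qinf : Measure X) := by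
    intro y hy
    have hR : Tendsto (fun k =>
        (∫ x, l y (v (σ k)) x ∂(Q (σ k) : Measure X))
          + (‖y‖ ^ 2 - v (σ k) ^ 2) / (σ k : ℝ))
        atTop (𝓝 (∫ x, l y vs x ∂(Qinf : Measure X))) := by
      have h1 := aux_integral_param l hl hQσ (tendsto_const_nhds (x := y)) hvσ
      have h2 := aux_div_zero hσtop
        ((tendsto_const_nhds (x := ‖y‖ ^ 2)).sub (hvσ.pow 2))
      simpa using h1.add h2
    refine le_of_tendsto_of_tendsto hS hR ?_
    filter_upwards [hev] with k hk
    exact (hsaddle (σ k) hk y hy (v (σ k)) (hv (σ k))).2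
  -- all saddle points have the same value
  have e1 := hsaddleinf us husY vs hvsΛ
  have e2 := hA vinf hvinf
  have e3 := hB uinf huinf
  have hVeq : (∫ x, l us vs x ∂(Qinf : Measure X))
      = ∫ x, l uinf vinf x ∂(Qinf : Measure X) := by
    obtain ⟨e1a, e1b⟩ := e1
    linarith
  exact ⟨φ1 ∘ φ2, by rw [← hVeq]; exact hS⟩
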